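/- Combining a tree and a join bound the output length: if T ⊆ E is a spanning tree with ℓ(T) ≤ OPT, J ⊆ E is a Q_T-join with ℓ(J) ≤ OPT/2 where Q_T = odd(T) △ {s,t}, then the multigraph with edge multiset T ⊎ J has all degrees even except at s and t (which have odd degree), hence contains an Eulerian s-t trail, and shortcutting under the triangle inequality yields a Hamiltonian s-t path of length at most (3/2)·OPT. -/

import Mathlib

set_option linter.unusedSectionVars false
set_option maxHeartbeats 1000000


open Finset

variable {V E : Type*}

section Defs
variable [DecidableEq V] [Fintype E] [DecidableEq E]

/-- Edges of the cut `δ(C)`: edges with exactly one endpoint in `C`. -/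
def cutE (f g : E → V) (C : Finset V) : Finset E :=
  Finset.univ.filter fun e => ¬((f e ∈ C) ↔ (g e ∈ C))

/-- `y(δ(C))`, the total `y`-value of the cut `δ(C)`. -/
def cutVal (f g : E → V) (y : E → ℝ) (C : Finset V) : ℝ :=
  ∑ e ∈ cutE f g C, y e

/-- Degree of vertex `v` in the edge set `T`. -/
def degIn (f g : E → V) (T : Finset E) (v : V) : ℕ :=
  (T.filter fun e => f e = v ∨ g e = v).card

/-- `odd(T)`: vertices of odd degree with respect to `T`. -/
def oddVerts [Fintype V] (f g : E → V) (T : Finset E) : Finset V :=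
  Finset.univ.filter fun v => Odd (degIn f g T v)

/-- Adjacency via an edge of `T`. -/
def adjIn (f g : E → V) (T : Finset E) (a b : V) : Prop :=
  ∃ e ∈ T, (f e = a ∧ g e = b) ∨ (f e = b ∧ g e = a)

/-- `T` is a spanning tree: it connects all vertices and has `|V| - 1` edges. -/
def isSpanningTree [Fintype V] (f g : E → V) (T : Finset E) : Prop :=
  (∀ a b : V, Relation.ReflTransGen (adjIn f g T) a b) ∧
  T.card = Fintype.card V - 1

/-- Membership in the Held-Karp Path TSP polytope `P_HK` with endpoints `s`, `t`. -/
def memHK [Fintype V] (f g : E → V) (s t : V) (y : E → ℝ) : Prop :=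
  (∀ e, 0 ≤ y e) ∧
  (∀ C : Finset V, C.Nonempty → C ≠ Finset.univ → (s ∈ C ↔ t ∈ C) →
    2 ≤ cutVal f g y C) ∧
  (∀ C : Finset V, ¬(s ∈ C ↔ t ∈ C) → 1 ≤ cutVal f g y C) ∧
  (∀ v : V, v ≠ s → v ≠ t → cutVal f g y {v} = 2) ∧
  cutVal f g y {s} = 1 ∧ cutVal f g y {t} = 1

/-- `y` is `ℬ`-good: on each cut of the family, the load is at least `3`, or it is
exactly `1` with `y` integral on the cut. -/
def isGood (f g : E → V) (y : E → ℝ) (ℬ : Set (Finset V)) : Prop :=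
  ∀ C ∈ ℬ, 3 ≤ cutVal f g y C ∨
    (cutVal f g y C = 1 ∧ ∀ e ∈ cutE f g C, y e = 0 ∨ y e = 1)

/-- `E[W]`: edges with both endpoints in `W`. -/
def edgesIn (f g : E → V) (W : Finset V) : Finset E :=
  Finset.univ.filter fun e => f e ∈ W ∧ g e ∈ W

/-- Membership in the spanning tree polytope of the graph (Edmonds' description). -/
def memST [Fintype V] (f g : E → V) (x : E → ℝ) : Prop :=
  (∀ e, 0 ≤ x e) ∧
  (∑ e, x e) = (Fintype.card V : ℝ) - 1 ∧
  ∀ W : Finset V, W.Nonempty → ∑ e ∈ edgesIn f g W, x e ≤ (W.card : ℝ) - 1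

/-- Membership in the spanning tree polytope of the induced subgraph `G[W]`,
viewed in `ℝ^E` with coordinates outside `E[W]` equal to zero. -/
def memSTon (f g : E → V) (W : Finset V) (x : E → ℝ) : Prop :=
  (∀ e, 0 ≤ x e) ∧ (∀ e, e ∉ edgesIn f g W → x e = 0) ∧
  (∑ e ∈ edgesIn f g W, x e) = (W.card : ℝ) - 1 ∧
  ∀ S : Finset V, S ⊆ W → S.Nonempty → ∑ e ∈ edgesIn f g S, x e ≤ (S.card : ℝ) - 1

/-- Membership in the Held-Karp relaxation `P_HK(W, u, v)` for `u`-`v` Path TSP on the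
induced subgraph `G[W]`, viewed in `ℝ^E` with coordinates outside `E[W]` equal to zero. -/
def memHKon (f g : E → V) (W : Finset V) (u v : V) (x : E → ℝ) : Prop :=
  (∀ e, 0 ≤ x e) ∧
  (∀ e, e ∉ edgesIn f g W → x e = 0) ∧
  (∀ C : Finset V, C ⊆ W → C.Nonempty → C ≠ W → (u ∈ C ↔ v ∈ C) →
    2 ≤ cutVal f g x C) ∧
  (∀ C : Finset V, C ⊆ W → ¬(u ∈ C ↔ v ∈ C) → 1 ≤ cutVal f g x C) ∧
  (∀ w ∈ W, w ≠ u → w ≠ v → cutVal f g x {w} = 2) ∧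
  (u ≠ v → cutVal f g x {u} = 1 ∧ cutVal f g x {v} = 1)

end Defs


namespace Stmt19
variable {V E : Type*} [DecidableEq V] [DecidableEq E] (f g : E → V)

def mdeg (M : Multiset E) (v : V) : ℕ :=
  (M.filter fun e => f e = v ∨ g e = v).card

lemma mdeg_add (A B : Multiset E) (v : V) :
    mdeg f g (A + B) v = mdeg f g A v + mdeg f g B v := by
  simp [mdeg, Multiset.filter_add]

lemma mdeg_cons (e : E) (M : Multiset E) (v : V) :
    mdeg f g (e ::ₘ M) v = (if f e = v ∨ g e = v then 1 else 0) + mdeg f g M v := by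
  simp [mdeg, Multiset.filter_cons]
  split <;> simp

lemma exists_incident {M : Multiset E} {v : V} (h : 0 < mdeg f g M v) :
    ∃ e ∈ M, f e = v ∨ g e = v := by
  rw [mdeg, Multiset.card_pos_iff_exists_mem] at h
  obtain ⟨e, he⟩ := h
  exact ⟨e, (Multiset.mem_filter.1 he).1, (Multiset.mem_filter.1 he).2⟩

lemma mdeg_pos_of_mem {M : Multiset E} {e : E} (he : e ∈ M) {v : V}
    (hv : f e = v ∨ g e = v) : 0 < mdeg f g M v := by
  rw [mdeg, Multiset.card_pos_iff_exists_mem]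
  exact ⟨e, Multiset.mem_filter.2 ⟨he, hv⟩⟩

inductive IsWalk : List E → List V → Prop
  | nil (a : V) : IsWalk [] [a]
  | cons {e : E} {es : List E} {a b : V} {vs : List V}
      (h : (f e = a ∧ g e = b) ∨ (f e = b ∧ g e = a))
      (hw : IsWalk es (b :: vs)) : IsWalk (e :: es) (a :: b :: vs)

lemma IsWalk.glue {e1 e2 : List E} {w1 w2 : List V} (h1 : IsWalk f g e1 w1)
    (h2 : IsWalk f g e2 w2) (h : w1.getLast? = w2.head?) :
    IsWalk f g (e1 ++ e2) (w1 ++ w2.tail) := by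
  induction h1 with
  | nil a =>
    simp only [List.getLast?_singleton] at h
    cases w2 with
    | nil => simp at h
    | cons c t2 =>
      simp only [List.head?_cons, Option.some.injEq] at h
      subst h
      simpa using h2
  | @cons e es a b vs hstep hw ih =>
    have h' : (b :: vs).getLast? = w2.head? := by
      rwa [List.getLast?_cons_cons] at h
    have := ih h'
    simpa using IsWalk.cons hstep (by simpa using this)

lemma IsWalk.splice {es esc : List E} {vs vsc : List V} {u : V}
    (hw : IsWalk f g es vs) (hu : u ∈ vs) (hc : IsWalk f g esc vsc)
    (hh : vsc.head? = some u) (hl : vsc.getLast? = some u) :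
    ∃ es' vs', IsWalk f g es' vs' ∧ (es' : Multiset E) = ↑es + ↑esc ∧
      vs'.head? = vs.head? ∧ vs'.getLast? = vs.getLast? := by
  induction hw with
  | nil a =>
    have : u = a := by simpa using hu
    subst this
    exact ⟨esc, vsc, hc, by simp, by simp [hh], by simp [hl]⟩
  | @cons e es a b vs hstep hw ih =>
    by_cases hua : u = a
    · subst hua
      have hg := IsWalk.glue f g hc (IsWalk.cons hstep hw) (by rw [hl, List.head?_cons])
      refine ⟨esc ++ e :: es, vsc ++ (b :: vs), hg, by simp [add_comm], ?_, ?_⟩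
      · cases vsc with
        | nil => simp at hh
        | cons c t => simp only [List.head?_cons] at hh ⊢; simpa using hh
      · rw [List.getLast?_append, List.getLast?_cons_cons]
        cases h : (b :: vs).getLast? with
        | none => simp at h
        | some x => simp [h]
    · have hu' : u ∈ b :: vs := by
        rcases List.mem_cons.1 hu with h | h
        · exact absurd h hua
        · exact h
      obtain ⟨es2, vs2, hw2, hm2, hh2, hl2⟩ := ih hu'
      cases vs2 with
      | nil => simp at hh2
      | cons c t =>
        simp only [List.head?_cons, Option.some.injEq] at hh2
        subst hh2
        refine ⟨e :: es2, a :: c :: t, IsWalk.cons hstep hw2, ?_, by simp, ?_⟩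
        · have : ((e :: es2 : List E) : Multiset E) = e ::ₘ (es2 : Multiset E) := rfl
          rw [this, hm2]
          rfl
        · rw [List.getLast?_cons_cons, List.getLast?_cons_cons, hl2]


lemma extract (hloop : ∀ e, f e ≠ g e) :
    ∀ (n : ℕ) (M : Multiset E), M.card ≤ n → ∀ s : V, Odd (mdeg f g M s) →
    ∃ (t' : V) (es : List E) (vs : List V),
      t' ≠ s ∧ Odd (mdeg f g M t') ∧ IsWalk f g es vs ∧
      vs.head? = some s ∧ vs.getLast? = some t' ∧
      (es : Multiset E) ≤ M ∧
      (∀ v, Odd (mdeg f g (↑es) v) ↔ (v = s ∨ v = t')) := by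
  intro n
  induction n with
  | zero =>
    intro M hM s hs
    have h : M = 0 := by
      rw [← Multiset.card_eq_zero]; omega
    subst h
    simp [mdeg] at hs
  | succ n ih =>
    intro M hM s hs
    -- pick an edge at s
    have hpos : 0 < mdeg f g M s := hs.pos
    obtain ⟨e, heM, hinc⟩ := exists_incident f g hpos
    set v : V := if f e = s then g e else f e with hv
    have hends : (f e = s ∧ g e = v) ∨ (f e = v ∧ g e = s) := by
      rcases hinc with h | h
      · left; exact ⟨h, by simp [hv, h]⟩
      · right
        constructor
        · simp only [hv]
          split
          · next h' => exact absurd (h'.trans h.symm) (hloop e)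
          · rfl
        · exact h
    have hvs : v ≠ s := by
      rcases hends with ⟨h1, h2⟩ | ⟨h1, h2⟩
      · exact fun hh => hloop e (by rw [h1, h2]; exact hh.symm)
      · exact fun hh => hloop e (by rw [h1, h2]; exact hh)
    have hincident : ∀ x : V, (f e = x ∨ g e = x) ↔ (x = s ∨ x = v) := by
      intro x
      rcases hends with ⟨h1, h2⟩ | ⟨h1, h2⟩ <;>
        constructor <;> rintro (rfl | rfl) <;> simp [h1, h2] <;> tauto
    clear_value v
    set M' := M.erase e with hM'
    have hMeq : M = e ::ₘ M' := (Multiset.cons_erase heM).symm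
    have hcard : M'.card ≤ n := by
      have h1 : M'.card = M.card - 1 := by
        rw [hM', Multiset.card_erase_of_mem heM, Nat.pred_eq_sub_one]
      omega
    have hdeg : ∀ x, mdeg f g M x = (if x = s ∨ x = v then 1 else 0) + mdeg f g M' x := by
      intro x
      rw [hMeq, mdeg_cons]
      congr 1
      simp [hincident x]
    by_cases hvodd : Odd (mdeg f g M v)
    · -- single-edge trail
      refine ⟨v, [e], [s, v], hvs, hvodd, ?_, rfl, rfl, ?_, ?_⟩
      · exact IsWalk.cons hends (IsWalk.nil v)
      · rw [hMeq]
        exact Multiset.cons_le_cons e (Multiset.zero_le _)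
      · intro x
        have : ((([e] : List E) : Multiset E)) = e ::ₘ 0 := rfl
        rw [this, mdeg_cons]
        simp only [mdeg, Multiset.filter_zero, Multiset.card_zero, add_zero, hincident x]
        split
        · next h => simp [h]
        · next h => simp [h]
    · -- recurse
      have hModd : Odd (mdeg f g M' v) := by
        have heq : mdeg f g M v = 1 + mdeg f g M' v := by
          have := hdeg v
          simpa using this
        rw [Nat.not_odd_iff_even, heq] at hvodd
        obtain ⟨k, hk⟩ := hvodd
        exact ⟨k - 1, by omega⟩
      obtain ⟨t', es', vs', ht'v, ht'odd, hwalk, hhead, hlast, hle, hpar⟩ :=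
        ih M' hcard v hModd
      have hsM' : ¬ Odd (mdeg f g M' s) := by
        have := hdeg s
        simp only [true_or, if_true] at this
        intro hodd
        rw [this] at hs
        rcases hs with ⟨k, hk⟩; rcases hodd with ⟨m, hm⟩; omega
      have ht's : t' ≠ s := fun hh => hsM' (hh ▸ ht'odd)
      have ht'M : Odd (mdeg f g M t') := by
        have := hdeg t'
        rw [if_neg (by push_neg; exact ⟨ht's, ht'v⟩)] at this
        rw [this, zero_add]; exact ht'odd
      cases vs' with
      | nil => simp at hhead
      | cons c vs'' =>
        simp only [List.head?_cons, Option.some.injEq] at hhead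
        subst hhead
        refine ⟨t', e :: es', s :: c :: vs'', ht's, ht'M,
          IsWalk.cons hends hwalk, rfl, ?_, ?_, ?_⟩
        · rw [List.getLast?_cons_cons]; exact hlast
        · rw [hMeq]
          exact Multiset.cons_le_cons e hle
        · intro x
          have hcast : (((e :: es' : List E)) : Multiset E) = e ::ₘ (es' : Multiset E) := rfl
          rw [hcast, mdeg_cons]
          simp only [hincident x]
          have hp := hpar x
          by_cases hx : x = s ∨ x = c
          · rw [if_pos hx]
            rcases hx with rfl | rfl
            · have hev : Even (mdeg f g (↑es') x) := by
                rw [← Nat.not_odd_iff_even, hp]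
                push_neg
                exact ⟨fun h => hvs h.symm, fun h => ht's h.symm⟩
              obtain ⟨k, hk⟩ := hev
              exact iff_of_true ⟨k, by omega⟩ (Or.inl rfl)
            · have hod : Odd (mdeg f g (↑es') x) := hp.2 (Or.inl rfl)
              obtain ⟨k, hk⟩ := hod
              refine iff_of_false ?_ ?_
              · rintro ⟨m, hm⟩; omega
              · rintro (rfl | rfl)
                · exact hvs rfl
                · exact ht'v rfl
          · rw [if_neg hx, zero_add, hp]
            push_neg at hx
            constructor
            · rintro (rfl | rfl)
              · exact absurd rfl hx.2
              · exact Or.inr rfl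
            · rintro (rfl | rfl)
              · exact absurd rfl hx.1
              · exact Or.inr rfl

lemma extractClosed (hloop : ∀ e, f e ≠ g e) (M : Multiset E)
    (heven : ∀ v, ¬ Odd (mdeg f g M v)) {u : V} (hu : 0 < mdeg f g M u) :
    ∃ (es : List E) (vs : List V), es ≠ [] ∧ IsWalk f g es vs ∧
      vs.head? = some u ∧ vs.getLast? = some u ∧ (es : Multiset E) ≤ M ∧
      (∀ v, ¬ Odd (mdeg f g (↑es) v)) := by
  obtain ⟨e, heM, hinc⟩ := exists_incident f g hu
  set v : V := if f e = u then g e else f e with hv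
  have hends : (f e = u ∧ g e = v) ∨ (f e = v ∧ g e = u) := by
    rcases hinc with h | h
    · left; exact ⟨h, by simp [hv, h]⟩
    · right
      constructor
      · simp only [hv]
        split
        · next h' => exact absurd (h'.trans h.symm) (hloop e)
        · rfl
      · exact h
  have hvu : v ≠ u := by
    rcases hends with ⟨h1, h2⟩ | ⟨h1, h2⟩
    · exact fun hh => hloop e (by rw [h1, h2]; exact hh.symm)
    · exact fun hh => hloop e (by rw [h1, h2]; exact hh)
  have hincident : ∀ x : V, (f e = x ∨ g e = x) ↔ (x = u ∨ x = v) := by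
    intro x
    rcases hends with ⟨h1, h2⟩ | ⟨h1, h2⟩ <;>
      constructor <;> rintro (rfl | rfl) <;> simp [h1, h2]
  clear_value v
  set M' := M.erase e with hM'
  have hMeq : M = e ::ₘ M' := (Multiset.cons_erase heM).symm
  have hdeg : ∀ x, mdeg f g M x = (if x = u ∨ x = v then 1 else 0) + mdeg f g M' x := by
    intro x
    rw [hMeq, mdeg_cons]
    congr 1
    simp [hincident x]
  have hM'v : Odd (mdeg f g M' v) := by
    have heq := hdeg v
    simp only [or_true, if_true] at heq
    have := heven v
    rw [Nat.not_odd_iff_even, heq] at this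
    obtain ⟨k, hk⟩ := this
    exact ⟨k - 1, by omega⟩
  obtain ⟨t', es', vs', ht'v, ht'odd, hwalk, hhead, hlast, hle, hpar⟩ :=
    extract f g hloop M'.card M' le_rfl v hM'v
  have ht'u : t' = u := by
    by_contra hne
    have heq := hdeg t'
    rw [if_neg (by push_neg; exact ⟨hne, ht'v⟩), zero_add] at heq
    exact heven t' (heq ▸ ht'odd)
  rw [ht'u] at hlast hpar ht'v
  cases vs' with
  | nil => simp at hhead
  | cons c vs'' =>
    simp only [List.head?_cons, Option.some.injEq] at hhead
    subst hhead
    refine ⟨e :: es', u :: c :: vs'', by simp, IsWalk.cons ?_ hwalk, rfl, ?_, ?_, ?_⟩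
    · exact hends
    · rw [List.getLast?_cons_cons]; exact hlast
    · rw [hMeq]; exact Multiset.cons_le_cons e hle
    · intro x
      have hcast : (((e :: es' : List E)) : Multiset E) = e ::ₘ (es' : Multiset E) := rfl
      rw [hcast, mdeg_cons]
      simp only [hincident x]
      have hp := hpar x
      by_cases hx : x = u ∨ x = c
      · rw [if_pos hx]
        have hod : Odd (mdeg f g (↑es') x) := by
          rw [hp]; tauto
        obtain ⟨k, hk⟩ := hod
        rintro ⟨m, hm⟩; omega
      · rw [if_neg hx, zero_add, hp]
        push_neg at hx
        rintro (rfl | rfl)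
        · exact hx.2 rfl
        · exact hx.1 rfl

lemma IsWalk.endpoints_mem {es : List E} {vs : List V} (h : IsWalk f g es vs) :
    ∀ e ∈ es, f e ∈ vs ∧ g e ∈ vs := by
  induction h with
  | nil a => simp
  | cons h hw ih =>
    intro e' he'
    rcases List.mem_cons.1 he' with rfl | he'
    · rcases h with ⟨h1, h2⟩ | ⟨h1, h2⟩ <;> simp [h1, h2]
    · obtain ⟨h1, h2⟩ := ih e' he'
      exact ⟨List.mem_cons_of_mem _ h1, List.mem_cons_of_mem _ h2⟩

lemma cross {r : V → V → Prop} {S : Set V} {w s : V}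
    (h : Relation.ReflTransGen r w s) (hw : w ∉ S) (hs : s ∈ S) :
    ∃ x y, r x y ∧ x ∉ S ∧ y ∈ S := by
  induction h with
  | refl => exact absurd hs hw
  | @tail b c hwb hbc ih =>
    by_cases hb : b ∈ S
    · exact ih hb
    · exact ⟨b, c, hbc, hb, hs⟩

def adjIn' (T : Finset E) (a b : V) : Prop :=
  ∃ e ∈ T, (f e = a ∧ g e = b) ∨ (f e = b ∧ g e = a)

lemma find_u {T : Finset E} {s : V}
    (hconn : ∀ a b : V, Relation.ReflTransGen (adjIn' f g T) a b)
    {es : List E} {vs : List V} {R : Multiset E}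
    (hTM : (T.val : Multiset E) ≤ (es : Multiset E) + R)
    (hwalk : IsWalk f g es vs) (hs : s ∈ vs) (hR : R ≠ 0) :
    ∃ u ∈ vs, 0 < mdeg f g R u := by
  obtain ⟨e0, he0⟩ := Multiset.exists_mem_of_ne_zero hR
  by_cases hw : f e0 ∈ vs
  · exact ⟨f e0, hw, mdeg_pos_of_mem f g he0 (Or.inl rfl)⟩
  · obtain ⟨x, y, hxy, hx, hy⟩ := cross (S := {v : V | v ∈ vs})
      (hconn (f e0) s) hw hs
    obtain ⟨e1, he1T, hends⟩ := hxy
    have he1M : e1 ∈ (es : Multiset E) + R := Multiset.mem_of_le hTM he1T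
    rcases Multiset.mem_add.1 he1M with h | h
    · exfalso
      obtain ⟨h1, h2⟩ := hwalk.endpoints_mem f g e1 (by exact_mod_cast h)
      rcases hends with ⟨ha, hb⟩ | ⟨ha, hb⟩
      · exact hx (ha ▸ h1)
      · exact hx (hb ▸ h2)
    · refine ⟨y, hy, mdeg_pos_of_mem f g h ?_⟩
      rcases hends with ⟨ha, hb⟩ | ⟨ha, hb⟩
      · exact Or.inr hb
      · exact Or.inl ha


lemma grow {T : Finset E} {s t : V} {M : Multiset E}
    (hconn : ∀ a b : V, Relation.ReflTransGen (adjIn' f g T) a b)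
    (hTM : (T.val : Multiset E) ≤ M) (hloop : ∀ e, f e ≠ g e) :
    ∀ (n : ℕ) (R : Multiset E), R.card ≤ n → (∀ v, ¬ Odd (mdeg f g R v)) →
    ∀ (es : List E) (vs : List V), IsWalk f g es vs → vs.head? = some s →
      vs.getLast? = some t → (es : Multiset E) + R = M →
    ∃ (es' : List E) (vs' : List V), IsWalk f g es' vs' ∧
      (es' : Multiset E) = M ∧ vs'.head? = some s ∧ vs'.getLast? = some t := by
  intro n
  induction n with
  | zero =>
    intro R hR _ es vs hw hh hl hM
    have : R = 0 := by
      rw [← Multiset.card_eq_zero]; omega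
    subst this
    exact ⟨es, vs, hw, by simpa using hM, hh, hl⟩
  | succ n ih =>
    intro R hR heven es vs hw hh hl hM
    by_cases hR0 : R = 0
    · subst hR0
      exact ⟨es, vs, hw, by simpa using hM, hh, hl⟩
    · have hsvs : s ∈ vs := by
        cases vs with
        | nil => simp at hh
        | cons a l =>
          simp only [List.head?_cons, Option.some.injEq] at hh
          exact hh ▸ (List.mem_cons_self (a := a) (l := l)) 
      obtain ⟨u, hu_vs, hu_pos⟩ := find_u f g hconn (hM ▸ hTM) hw hsvs hR0
      obtain ⟨esc, vsc, hesc_ne, hcw, hch, hcl, hcle, hceven⟩ :=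
        extractClosed f g hloop R heven hu_pos
      obtain ⟨es1, vs1, hw1, hm1, hh1, hl1⟩ :=
        IsWalk.splice f g hw hu_vs hcw hch hcl
      have hRle : (esc : Multiset E) ≤ R := hcle
      have hcard : (R - ↑esc).card ≤ n := by
        have h1 : (R - (esc : Multiset E)).card = R.card - (esc : Multiset E).card :=
          Multiset.card_sub hRle
        have h2 : 0 < (esc : Multiset E).card := by
          rw [Multiset.coe_card]
          exact List.length_pos_iff.2 hesc_ne
        omega
      have heven' : ∀ v, ¬ Odd (mdeg f g (R - ↑esc) v) := by
        intro v hv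
        have hRe : (R - (esc : Multiset E)) + ↑esc = R := tsub_add_cancel_of_le hRle
        have := heven v
        rw [← hRe, mdeg_add] at this
        have hce := hceven v
        rw [Nat.not_odd_iff_even] at hce this
        obtain ⟨k, hk⟩ := hce
        obtain ⟨m, hm⟩ := this
        obtain ⟨p, hp⟩ := hv
        omega
      refine ih (R - ↑esc) hcard heven' es1 vs1 hw1 (by rw [hh1, hh]) (by rw [hl1, hl]) ?_
      rw [hm1, add_assoc]
      rw [show (esc : Multiset E) + (R - ↑esc) = R by
        rw [add_comm]; exact tsub_add_cancel_of_le hRle]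
      exact hM

end Stmt19




namespace Stmt19M
variable {V : Type*} [DecidableEq V]

def lenFrom (ℓ : V → V → ℝ) : V → List V → ℝ
  | _, [] => 0
  | a, b :: L => ℓ a b + lenFrom ℓ b L

variable {ℓ : V → V → ℝ}

lemma lenFrom_nonneg (hnn : ∀ a b, 0 ≤ ℓ a b) : ∀ (L : List V) (a : V), 0 ≤ lenFrom ℓ a L := by
  intro L
  induction L with
  | nil => intro a; simp [lenFrom]
  | cons b L ih => intro a; simpa [lenFrom] using add_nonneg (hnn a b) (ih b)

lemma lenFrom_skip (hnn : ∀ a b, 0 ≤ ℓ a b) (htri : ∀ a b c, ℓ a c ≤ ℓ a b + ℓ b c)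
    (L : List V) (a b : V) : lenFrom ℓ a L ≤ ℓ a b + lenFrom ℓ b L := by
  cases L with
  | nil => simpa [lenFrom] using hnn a b
  | cons c L =>
    simp only [lenFrom]
    have := htri a b c
    linarith

lemma lenFrom_sublist (hnn : ∀ a b, 0 ≤ ℓ a b) (htri : ∀ a b c, ℓ a c ≤ ℓ a b + ℓ b c) :
    ∀ {P vs : List V}, List.Sublist P vs → P.getLast? = vs.getLast? →
      ∀ a, lenFrom ℓ a P ≤ lenFrom ℓ a vs := by
  intro P vs h
  induction h with
  | slnil => intro _ a; exact le_refl _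
  | @cons P' vs' b h ih =>
    intro hl a
    cases vs' with
    | nil =>
      rw [List.sublist_nil] at h
      subst h
      simp at hl
    | cons c vs'' =>
      have hl' : P'.getLast? = (c :: vs'').getLast? := by
        rwa [List.getLast?_cons_cons] at hl
      calc lenFrom ℓ a P' ≤ lenFrom ℓ a (c :: vs'') := ih hl' a
        _ ≤ ℓ a b + lenFrom ℓ b (c :: vs'') := lenFrom_skip hnn htri _ a b
        _ = lenFrom ℓ a (b :: c :: vs'') := rfl
  | @cons_cons P' vs' b h ih =>
    intro hl a
    simp only [lenFrom]
    cases P' with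
    | nil =>
      simpa [lenFrom] using add_le_add_right (lenFrom_nonneg hnn vs' b) (ℓ a b)
    | cons c P'' =>
      cases vs' with
      | nil =>
        rw [List.sublist_nil] at h
        simp at h
      | cons d vs'' =>
        have hl' : (c :: P'').getLast? = (d :: vs'').getLast? := by
          rw [List.getLast?_cons_cons, List.getLast?_cons_cons] at hl
          exact hl
        exact add_le_add_right (ih hl' b) (ℓ a b)

lemma getLast?_dedup : ∀ (l : List V), l.dedup.getLast? = l.getLast? := by
  intro l
  induction l with
  | nil => simp
  | cons a l ih =>
    by_cases h : a ∈ l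
    · rw [List.dedup_cons_of_mem h, ih]
      cases l with
      | nil => simp at h
      | cons b l' => rw [List.getLast?_cons_cons]
    · rw [List.dedup_cons_of_notMem h]
      cases l with
      | nil => simp
      | cons b l' =>
        have hne : (b :: l').dedup ≠ [] := by
          intro hh
          have : b ∈ (b :: l').dedup := List.mem_dedup.2 (List.mem_cons_self (a := b) (l := l'))
          rw [hh] at this
          simp at this
        cases hd : (b :: l').dedup with
        | nil => exact absurd hd hne
        | cons c m =>
          rw [List.getLast?_cons_cons, ← hd, ih, List.getLast?_cons_cons]

lemma getLast?_erase {s x : V} : ∀ (l : List V), l.getLast? = some x → x ≠ s →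
    (l.erase s).getLast? = some x := by
  intro l
  induction l with
  | nil => simp
  | cons a l ih =>
    intro hl hxs
    cases l with
    | nil =>
      simp only [List.getLast?_singleton, Option.some.injEq] at hl
      subst hl
      rw [List.erase_cons_tail (by simp [hxs])]
      simp [List.erase_nil]
    | cons b l' =>
      rw [List.getLast?_cons_cons] at hl
      by_cases has : a = s
      · rw [has, List.erase_cons_head]
        exact hl
      · rw [List.erase_cons_tail (by simp [has])]
        have hrec := ih hl hxs
        cases he : (b :: l').erase s with
        | nil => rw [he] at hrec; simp at hrec
        | cons c m =>
          rw [he] at hrec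
          rw [List.getLast?_cons_cons, hrec]

end Stmt19M

namespace Stmt19
variable {V E : Type*} [DecidableEq V] [DecidableEq E] (f g : E → V)

lemma IsWalk.length {es : List E} {vs : List V} (h : IsWalk f g es vs) :
    vs.length = es.length + 1 := by
  induction h with
  | nil a => simp
  | cons h hw ih => simpa using ih

lemma IsWalk.zip_spec {es : List E} {vs : List V} (h : IsWalk f g es vs) :
    ∀ p ∈ es.zip (vs.zip vs.tail),
      (f p.1 = p.2.1 ∧ g p.1 = p.2.2) ∨ (f p.1 = p.2.2 ∧ g p.1 = p.2.1) := by
  induction h with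
  | nil a => simp
  | cons h hw ih =>
    intro p hp
    simp only [List.tail_cons, List.zip_cons_cons, List.mem_cons] at hp
    rcases hp with rfl | hp
    · exact h
    · exact ih p (by simpa using hp)

lemma IsWalk.sum_len {ℓ : V → V → ℝ} (hsymm : ∀ a b, ℓ a b = ℓ b a) :
    ∀ {es : List E} {vs : List V}, IsWalk f g es vs → ∀ (a : V) (L : List V),
      vs = a :: L → Stmt19M.lenFrom ℓ a L = (es.map fun e => ℓ (f e) (g e)).sum := by
  intro es vs h
  induction h with
  | nil a =>
    intro a' L hL
    obtain ⟨rfl, rfl⟩ : a = a' ∧ L = [] := by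
      cases hL; exact ⟨rfl, rfl⟩
    simp [Stmt19M.lenFrom]
  | @cons e es a b vs hstep hw ih =>
    intro a' L hL
    obtain ⟨rfl, rfl⟩ : a = a' ∧ L = b :: vs := by
      cases hL; exact ⟨rfl, rfl⟩
    simp only [Stmt19M.lenFrom, List.map_cons, List.sum_cons]
    rw [ih b vs rfl]
    congr 1
    rcases hstep with ⟨h1, h2⟩ | ⟨h1, h2⟩
    · rw [h1, h2]
    · rw [h1, h2, hsymm]

lemma zipsum {ℓ : V → V → ℝ} :
    ∀ (L : List V) (a : V),
      (((a :: L).zip L).map fun p => ℓ p.1 p.2).sum = Stmt19M.lenFrom ℓ a L := by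
  intro L
  induction L with
  | nil => intro a; simp [Stmt19M.lenFrom]
  | cons b L ih =>
    intro a
    simp only [List.zip_cons_cons, List.map_cons, List.sum_cons, Stmt19M.lenFrom]
    rw [ih b]

end Stmt19

/-- If `T` is a spanning tree with `ℓ(T) ≤ OPT` and `J` is a `Q_T`-join
with `ℓ(J) ≤ OPT/2`, where `Q_T = odd(T) △ {s,t}`, then in the multigraph `T ⊎ J` all
degrees are even except at `s` and `t` (which are odd), there exists an Eulerian
`s`-`t` trail using each edge of `T ⊎ J` exactly once, and (by shortcutting under the
triangle inequality) there is a Hamiltonian `s`-`t` path of length at most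
`(3/2)·OPT`. -/





theorem stmt_19 [Fintype V] [DecidableEq V] [Fintype E] [DecidableEq E]
    (f g : E → V) (hloop : ∀ e, f e ≠ g e) (s t : V) (hst : s ≠ t)
    (ℓ : V → V → ℝ) (hsymm : ∀ a b, ℓ a b = ℓ b a) (hnn : ∀ a b, 0 ≤ ℓ a b)
    (hself : ∀ a, ℓ a a = 0) (htri : ∀ a b c, ℓ a c ≤ ℓ a b + ℓ b c)
    (OPT : ℝ)
    (T : Finset E) (hT : isSpanningTree f g T)
    (hTlen : ∑ e ∈ T, ℓ (f e) (g e) ≤ OPT)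
    (J : Finset E) (hJ : oddVerts f g J = symmDiff (oddVerts f g T) {s, t})
    (hJlen : ∑ e ∈ J, ℓ (f e) (g e) ≤ OPT / 2) :
    (∀ v : V, v ≠ s → v ≠ t → Even (degIn f g T v + degIn f g J v)) ∧
    Odd (degIn f g T s + degIn f g J s) ∧
    Odd (degIn f g T t + degIn f g J t) ∧
    (∃ (es : List E) (vs : List V),
      (es : Multiset E) = T.val + J.val ∧
      vs.length = es.length + 1 ∧ vs.head? = some s ∧ vs.getLast? = some t ∧
      ∀ p ∈ es.zip (vs.zip vs.tail),
        (f p.1 = p.2.1 ∧ g p.1 = p.2.2) ∨ (f p.1 = p.2.2 ∧ g p.1 = p.2.1)) ∧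
    (∃ P : List V, P.Nodup ∧ (∀ v : V, v ∈ P) ∧
      P.head? = some s ∧ P.getLast? = some t ∧
      ((P.zip P.tail).map fun p => ℓ p.1 p.2).sum ≤ 3 / 2 * OPT) := by
  classical
  set M : Multiset E := T.val + J.val with hM
  have hdeg_eq : ∀ (A : Finset E) (v : V), degIn f g A v = Stmt19.mdeg f g A.val v :=
    fun A v => rfl
  -- parity of combined degrees
  have hpar : ∀ v : V, Odd (degIn f g T v + degIn f g J v) ↔ (v = s ∨ v = t) := by
    intro v
    have hmem : v ∈ oddVerts f g J ↔ v ∈ symmDiff (oddVerts f g T) {s, t} := by rw [hJ]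
    simp only [oddVerts, Finset.mem_filter, Finset.mem_univ, true_and,
      Finset.mem_symmDiff, Finset.mem_insert, Finset.mem_singleton] at hmem
    rw [Nat.odd_add, ← Nat.not_odd_iff_even]
    tauto
  have hparM : ∀ v : V, Odd (Stmt19.mdeg f g M v) ↔ (v = s ∨ v = t) := by
    intro v
    rw [hM, Stmt19.mdeg_add, ← hdeg_eq, ← hdeg_eq]
    exact hpar v
  -- initial trail extraction
  obtain ⟨t', es0, vs0, ht's, ht'odd, hw0, hh0, hl0, hle0, hpar0⟩ :=
    Stmt19.extract f g hloop M.card M le_rfl s ((hparM s).2 (Or.inl rfl))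
  have ht't : t' = t := by
    rcases (hparM t').1 ht'odd with h | h
    · exact absurd h ht's
    · exact h
  rw [ht't] at hl0 hpar0
  have heven0 : ∀ v, ¬ Odd (Stmt19.mdeg f g (M - ↑es0) v) := by
    intro v hv
    have hre : (M - ↑es0) + ↑es0 = M := tsub_add_cancel_of_le hle0
    have hMv := hparM v
    rw [← hre, Stmt19.mdeg_add] at hMv
    by_cases hst' : v = s ∨ v = t
    · have h1 : Odd (Stmt19.mdeg f g (↑es0) v) := (hpar0 v).2 hst'
      have h2 := hMv.2 hst'
      obtain ⟨a, ha⟩ := hv; obtain ⟨b, hb⟩ := h1; obtain ⟨c, hc⟩ := h2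
      omega
    · have h1 : ¬ Odd (Stmt19.mdeg f g (↑es0) v) := fun h => hst' ((hpar0 v).1 h)
      have h2 : ¬ Odd (Stmt19.mdeg f g (M - ↑es0) v + Stmt19.mdeg f g (↑es0) v) :=
        fun h => hst' (hMv.1 h)
      rw [Nat.not_odd_iff_even] at h1 h2
      obtain ⟨a, ha⟩ := hv; obtain ⟨b, hb⟩ := h1; obtain ⟨c, hc⟩ := h2
      omega
  have hconn : ∀ a b : V, Relation.ReflTransGen (Stmt19.adjIn' f g T) a b := hT.1
  have hTleM : (T.val : Multiset E) ≤ M := by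
    rw [hM]; exact le_add_right le_rfl
  obtain ⟨es, vs, hwalk, hesM, hh, hl⟩ :=
    Stmt19.grow f g hconn hTleM hloop (M - ↑es0).card (M - ↑es0) le_rfl heven0 es0 vs0
      hw0 hh0 hl0 (by rw [add_comm]; exact tsub_add_cancel_of_le hle0)
  -- every vertex occurs on the Eulerian trail
  have hsvs : s ∈ vs := by
    cases vs with
    | nil => simp at hh
    | cons a l =>
      simp only [List.head?_cons, Option.some.injEq] at hh
      exact hh ▸ (List.mem_cons_self (a := a) (l := l)) 
  have hall : ∀ v : V, v ∈ vs := by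
    intro v
    rcases (hT.1 v s).cases_head with rfl | ⟨y, hy, _⟩
    · exact hsvs
    · obtain ⟨e1, he1T, hends⟩ := hy
      have he1es : e1 ∈ es := by
        have : e1 ∈ M := Multiset.mem_of_le hTleM he1T
        rwa [← hesM, Multiset.mem_coe] at this
      obtain ⟨hf, hg⟩ := Stmt19.IsWalk.endpoints_mem f g hwalk e1 he1es
      rcases hends with ⟨h1, _⟩ | ⟨_, h2⟩
      · exact h1 ▸ hf
      · exact h2 ▸ hg
  refine ⟨?_, ?_, ?_, ?_, ?_⟩
  · intro v hvs hvt
    rw [← Nat.not_odd_iff_even, hpar v]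
    push_neg
    exact ⟨hvs, hvt⟩
  · exact (hpar s).2 (Or.inl rfl)
  · exact (hpar t).2 (Or.inr rfl)
  · exact ⟨es, vs, by rw [hesM, hM], Stmt19.IsWalk.length f g hwalk, hh, hl,
      Stmt19.IsWalk.zip_spec f g hwalk⟩
  · -- shortcutting
    cases vs with
    | nil => simp at hh
    | cons a rest =>
    simp only [List.head?_cons, Option.some.injEq] at hh
    subst hh
    have hts : t ≠ a := Ne.symm hst
    have hnd : (a :: rest).dedup.Nodup := List.nodup_dedup _
    have hdl : (a :: rest).dedup.getLast? = some t := by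
      rw [Stmt19M.getLast?_dedup]; exact hl
    have htd : t ∈ (a :: rest).dedup := List.mem_dedup.2 (hall t)
    have hel : ((a :: rest).dedup.erase a).getLast? = some t :=
      Stmt19M.getLast?_erase _ hdl hts
    have htX : t ∈ (a :: rest).dedup.erase a :=
      (List.Nodup.mem_erase_iff hnd).2 ⟨hts, htd⟩
    have hsub : ((a :: rest).dedup.erase a).Sublist rest := by
      by_cases hsr : a ∈ rest
      · rw [List.dedup_cons_of_mem hsr]
        exact (List.erase_sublist (a := a) (l := rest.dedup)).trans (List.dedup_sublist rest)
      · rw [List.dedup_cons_of_notMem hsr, List.erase_cons_head]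
        exact List.dedup_sublist rest
    have hrest_ne : rest ≠ [] := by
      intro h
      subst h
      simp only [List.getLast?_singleton, Option.some.injEq] at hl
      exact hst hl
    have hrl : rest.getLast? = some t := by
      cases rest with
      | nil => exact absurd rfl hrest_ne
      | cons b l =>
        rwa [List.getLast?_cons_cons] at hl
    refine ⟨a :: ((a :: rest).dedup.erase a), ?_, ?_, rfl, ?_, ?_⟩
    · refine List.nodup_cons.2 ⟨?_, hnd.erase a⟩
      intro h
      exact ((List.Nodup.mem_erase_iff hnd).1 h).1 rfl
    · intro v
      by_cases hva : v = a
      · exact hva ▸ List.mem_cons_self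
      · exact List.mem_cons_of_mem _
          ((List.Nodup.mem_erase_iff hnd).2 ⟨hva, List.mem_dedup.2 (hall v)⟩)
    · cases hX : (a :: rest).dedup.erase a with
      | nil => rw [hX] at htX; simp at htX
      | cons c m =>
        rw [List.getLast?_cons_cons, ← hX, hel]
    · have hzip := Stmt19.zipsum (ℓ := ℓ) ((a :: rest).dedup.erase a) a
      simp only [List.tail_cons]
      rw [hzip]
      have h1 : Stmt19M.lenFrom ℓ a ((a :: rest).dedup.erase a) ≤
          Stmt19M.lenFrom ℓ a rest :=
        Stmt19M.lenFrom_sublist hnn htri hsub (by rw [hel, hrl]) a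
      have h2 : Stmt19M.lenFrom ℓ a rest = (es.map fun e => ℓ (f e) (g e)).sum :=
        Stmt19.IsWalk.sum_len f g hsymm hwalk a rest rfl
      have h3 : (es.map fun e => ℓ (f e) (g e)).sum =
          (∑ e ∈ T, ℓ (f e) (g e)) + (∑ e ∈ J, ℓ (f e) (g e)) := by
        have hc : ((es : Multiset E).map fun e => ℓ (f e) (g e)).sum =
            (es.map fun e => ℓ (f e) (g e)).sum := by
          simp
        rw [← hc, hesM, hM, Multiset.map_add, Multiset.sum_add]
        rfl
      rw [h2] at h1
      rw [h3] at h1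
      linarith
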